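/- Let k = 2 and m ≥ 2. The pure trace algebra C_2m is generated as a unital K-algebra by the scalar matrices tr(y_i)·I for i = 1,…,m, tr(y_i y_j)·I for 1 ≤ i ≤ j ≤ m, and tr(y_{i_1} y_{i_2} y_{i_3})·I for 1 ≤ i_1 < i_2 < i_3 ≤ m. -/

import Mathlib

open scoped BigOperators
noncomputable section

/-- `Ω = K[y_pq^(i)]`, matrices over the polynomial ring in `k²m` variables. -/
abbrev Mat (K : Type) [Field K] (k m : ℕ) :=
  Matrix (Fin k) (Fin k) (MvPolynomial (Fin m × Fin k × Fin k) K)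

/-- The generic `k × k` matrices `y_i = (y_pq^(i))`. -/
def genY (K : Type) [Field K] (k m : ℕ) (i : Fin m) : Mat K k m :=
  Matrix.of fun p q => MvPolynomial.X (i, p, q)

/-- The scalar matrix `f · I` for `f ∈ Ω`. -/
def scalarOf (K : Type) [Field K] (k m : ℕ)
    (f : MvPolynomial (Fin m × Fin k × Fin k) K) : Mat K k m :=
  algebraMap _ _ f

/-- `R_km`: the generic matrix algebra, generated by `y_1, …, y_m`. -/
def Rkm (K : Type) [Field K] (k m : ℕ) : Subalgebra K (Mat K k m) :=
  Algebra.adjoin K (Set.range (genY K k m))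

/-- `C_km`: the pure trace algebra, generated by the `tr(y_{i_1} ⋯ y_{i_l}) · I`, `l ≥ 1`. -/
def Ckm (K : Type) [Field K] (k m : ℕ) : Subalgebra K (Mat K k m) :=
  Algebra.adjoin K
    {x | ∃ (l : ℕ) (w : Fin (l + 1) → Fin m),
      x = scalarOf K k m (Matrix.trace ((List.ofFn fun j => genY K k m (w j)).prod))}

/-- `T_km`: the mixed trace algebra, generated by `R_km ∪ C_km`. -/
def Tkm (K : Type) [Field K] (k m : ℕ) : Subalgebra K (Mat K k m) :=
  Rkm K k m ⊔ Ckm K k m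

/-- The generic traceless matrices `z_i = y_i - (1/k)·tr(y_i)·I`. -/
def genZ (K : Type) [Field K] (k m : ℕ) (i : Fin m) : Mat K k m :=
  genY K k m i - (k : K)⁻¹ • scalarOf K k m (Matrix.trace (genY K k m i))

/-- `W_km`: the algebra generated by the generic traceless matrices `z_1, …, z_m`. -/
def Wkm (K : Type) [Field K] (k m : ℕ) : Subalgebra K (Mat K k m) :=
  Algebra.adjoin K (Set.range (genZ K k m))

/-- `C_km⁰`: the algebra generated by the `tr(z_{i_1} ⋯ z_{i_l}) · I`, `l ≥ 1`. -/
def Ckm0 (K : Type) [Field K] (k m : ℕ) : Subalgebra K (Mat K k m) :=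
  Algebra.adjoin K
    {x | ∃ (l : ℕ) (w : Fin (l + 1) → Fin m),
      x = scalarOf K k m (Matrix.trace ((List.ofFn fun j => genZ K k m (w j)).prod))}

/-- `T_km⁰`: the algebra generated by `W_km ∪ C_km⁰`. -/
def Tkm0 (K : Type) [Field K] (k m : ℕ) : Subalgebra K (Mat K k m) :=
  Wkm K k m ⊔ Ckm0 K k m

/-- The subspace of matrices all of whose entries have total degree at most `n`,
i.e. `M_k(Ω_{≤n})`. -/
def degLE (K : Type) [Field K] (k m n : ℕ) : Submodule K (Mat K k m) where
  carrier := {a | ∀ p q, (a p q).totalDegree ≤ n}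
  add_mem' := by
    intro a b ha hb p q
    calc ((a + b) p q).totalDegree = (a p q + b p q).totalDegree := by simp [Matrix.add_apply]
    _ ≤ max (a p q).totalDegree (b p q).totalDegree := MvPolynomial.totalDegree_add _ _
    _ ≤ n := max_le (ha p q) (hb p q)
  zero_mem' := by intro p q; simp
  smul_mem' := by
    intro c a ha p q
    calc ((c • a) p q).totalDegree = (c • a p q).totalDegree := by simp [Matrix.smul_apply]
    _ ≤ (a p q).totalDegree := MvPolynomial.totalDegree_smul_le _ _
    _ ≤ n := ha p q

set_option linter.unusedSectionVars false

namespace Stmt9Aux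


open Matrix

private lemma g1 {R : Type} [CommRing R] (a b p : Matrix (Fin 2) (Fin 2) R) :
    trace (a * (b * p)) + trace (b * (a * p)) =
      trace a * trace (b * p) + trace b * trace (a * p)
        + (trace (a * b) - trace a * trace b) * trace p := by
  simp [Matrix.trace_fin_two, Matrix.mul_apply, Fin.sum_univ_two]
  ring

private lemma g4 {R : Type} [CommRing R] (a b c p : Matrix (Fin 2) (Fin 2) R) :
    trace (a * (b * (c * p))) + trace (a * (b * (c * p))) =
      trace a * trace (b * (c * p)) + trace b * trace (a * (c * p))
        - trace c * trace (a * (p * b)) + trace p * trace (a * (b * c))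
        + (trace (a * b) - trace a * trace b) * trace (c * p)
        - (trace (a * c) - trace a * trace c) * trace (b * p)
        + (trace (a * p) - trace a * trace p) * trace (b * c) := by
  simp [Matrix.trace_fin_two, Matrix.mul_apply, Fin.sum_univ_two]
  ring

variable (K : Type) [Field K] (m : ℕ)

def trw (u : List (Fin m)) : MvPolynomial (Fin m × Fin 2 × Fin 2) K :=
  Matrix.trace ((u.map (genY K 2 m)).prod)

lemma trw_cyc (u v : List (Fin m)) : trw K m (u ++ v) = trw K m (v ++ u) := by
  unfold trw
  rw [List.map_append, List.map_append, List.prod_append, List.prod_append]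
  exact Matrix.trace_mul_comm _ _

lemma trw_single (i : Fin m) : trw K m [i] = trace (genY K 2 m i) := by simp [trw]

lemma trw_pair (i j : Fin m) :
    trw K m [i, j] = trace (genY K 2 m i * genY K 2 m j) := by simp [trw]

lemma trw_triple (i j k : Fin m) :
    trw K m [i, j, k] = trace (genY K 2 m i * genY K 2 m j * genY K 2 m k) := by
  simp [trw, mul_assoc]

lemma trw_t1 (a b : Fin m) (x : List (Fin m)) :
    trw K m (a::b::x) + trw K m (b::a::x) =
      trw K m [a] * trw K m (b::x) + trw K m [b] * trw K m (a::x)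
        + (trw K m [a,b] - trw K m [a] * trw K m [b]) * trw K m x := by
  simp only [trw, List.map_cons, List.prod_cons, List.map_nil, List.prod_nil, mul_one]
  exact g1 _ _ _

lemma trw_t4 (a b c : Fin m) (x : List (Fin m)) :
    trw K m (a::b::c::x) + trw K m (a::b::c::x) =
      trw K m [a] * trw K m (b::c::x) + trw K m [b] * trw K m (a::c::x)
        - trw K m [c] * trw K m (a::(x++[b])) + trw K m x * trw K m [a,b,c]
        + (trw K m [a,b] - trw K m [a] * trw K m [b]) * trw K m (c::x)
        - (trw K m [a,c] - trw K m [a] * trw K m [c]) * trw K m (b::x)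
        + (trw K m (a::x) - trw K m [a] * trw K m x) * trw K m [b,c] := by
  simp only [trw, List.map_cons, List.prod_cons, List.map_nil, List.prod_nil, mul_one,
    List.map_append, List.prod_append]
  exact g4 _ _ _ _

lemma sc_add (f g : MvPolynomial (Fin m × Fin 2 × Fin 2) K) :
    scalarOf K 2 m (f + g) = scalarOf K 2 m f + scalarOf K 2 m g :=
  map_add (algebraMap _ _) f g

lemma sc_sub (f g : MvPolynomial (Fin m × Fin 2 × Fin 2) K) :
    scalarOf K 2 m (f - g) = scalarOf K 2 m f - scalarOf K 2 m g :=
  map_sub (algebraMap _ _) f g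

lemma sc_mul (f g : MvPolynomial (Fin m × Fin 2 × Fin 2) K) :
    scalarOf K 2 m (f * g) = scalarOf K 2 m f * scalarOf K 2 m g :=
  map_mul (algebraMap _ _) f g

def SA : Subalgebra K (Mat K 2 m) :=
  Algebra.adjoin K
      ({x | ∃ i, x = scalarOf K 2 m (Matrix.trace (genY K 2 m i))} ∪
       {x | ∃ i j, i ≤ j ∧
          x = scalarOf K 2 m (Matrix.trace (genY K 2 m i * genY K 2 m j))} ∪
       {x | ∃ i₁ i₂ i₃, i₁ < i₂ ∧ i₂ < i₃ ∧
          x = scalarOf K 2 m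
            (Matrix.trace (genY K 2 m i₁ * genY K 2 m i₂ * genY K 2 m i₃))})

lemma mem_one (i : Fin m) : scalarOf K 2 m (trw K m [i]) ∈ SA K m := by
  rw [trw_single]
  exact Algebra.subset_adjoin (Or.inl (Or.inl ⟨i, rfl⟩))

lemma mem_pair (i j : Fin m) : scalarOf K 2 m (trw K m [i, j]) ∈ SA K m := by
  rw [trw_pair]
  rcases le_total i j with h | h
  · exact Algebra.subset_adjoin (Or.inl (Or.inr ⟨i, j, h, rfl⟩))
  · rw [Matrix.trace_mul_comm]
    exact Algebra.subset_adjoin (Or.inl (Or.inr ⟨j, i, h, rfl⟩))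

variable [CharZero K]

lemma half_mem {p : Mat K 2 m} (h : p + p ∈ SA K m) : p ∈ SA K m := by
  have h2 := (SA K m).smul_mem h ((2:K)⁻¹)
  rwa [← two_smul K p, smul_smul, inv_mul_cancel₀ (by norm_num : (2:K) ≠ 0), one_smul] at h2

lemma mem_of_add {p q : Mat K 2 m} (h : p + q ∈ SA K m) (hq : q ∈ SA K m) : p ∈ SA K m := by
  have h2 := (SA K m).sub_mem h hq
  simpa using h2

lemma swap_sum (a b : Fin m) (x : List (Fin m))
    (h1 : scalarOf K 2 m (trw K m (b::x)) ∈ SA K m)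
    (h2 : scalarOf K 2 m (trw K m (a::x)) ∈ SA K m)
    (h3 : scalarOf K 2 m (trw K m x) ∈ SA K m) :
    scalarOf K 2 m (trw K m (a::b::x)) + scalarOf K 2 m (trw K m (b::a::x)) ∈ SA K m := by
  rw [← sc_add, trw_t1]
  simp only [sc_add, sc_sub, sc_mul]
  exact add_mem (add_mem (mul_mem (mem_one K m a) h1) (mul_mem (mem_one K m b) h2))
    (mul_mem (sub_mem (mem_pair K m a b) (mul_mem (mem_one K m a) (mem_one K m b))) h3)

lemma mem_triple_sorted (i j k : Fin m) (hij : i ≤ j) (hjk : j ≤ k) :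
    scalarOf K 2 m (trw K m [i, j, k]) ∈ SA K m := by
  rcases eq_or_lt_of_le hij with rfl | hij'
  · exact half_mem K m (swap_sum K m i i [k] (mem_pair K m i k) (mem_pair K m i k)
      (mem_one K m k))
  · rcases eq_or_lt_of_le hjk with rfl | hjk'
    · have hc : trw K m [i, j, j] = trw K m [j, j, i] := trw_cyc K m [i] [j, j]
      rw [hc]
      exact half_mem K m (swap_sum K m j j [i] (mem_pair K m j i) (mem_pair K m j i)
        (mem_one K m i))
    · exact Algebra.subset_adjoin (Or.inr ⟨i, j, k, hij', hjk', by rw [trw_triple]⟩)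

lemma mem_triple (i j k : Fin m) : scalarOf K 2 m (trw K m [i, j, k]) ∈ SA K m := by
  rcases le_total i j with hij | hji
  · rcases le_total j k with hjk | hkj
    · exact mem_triple_sorted K m i j k hij hjk
    · rcases le_total i k with hik | hki
      · have hc : trw K m [i, j, k] = trw K m [k, i, j] := (trw_cyc K m [k] [i, j]).symm
        rw [hc]
        exact mem_of_add K m
          (swap_sum K m k i [j] (mem_pair K m i j) (mem_pair K m k j) (mem_one K m j))
          (mem_triple_sorted K m i k j hik hkj)
      · have hc : trw K m [i, j, k] = trw K m [k, i, j] := (trw_cyc K m [k] [i, j]).symm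
        rw [hc]
        exact mem_triple_sorted K m k i j hki hij
  · rcases le_total i k with hik | hki
    · exact mem_of_add K m
        (swap_sum K m i j [k] (mem_pair K m j k) (mem_pair K m i k) (mem_one K m k))
        (mem_triple_sorted K m j i k hji hik)
    · rcases le_total j k with hjk | hkj
      · have hc : trw K m [i, j, k] = trw K m [j, k, i] := trw_cyc K m [i] [j, k]
        rw [hc]
        exact mem_triple_sorted K m j k i hjk hki
      · have hc : trw K m [i, j, k] = trw K m [j, k, i] := trw_cyc K m [i] [j, k]
        rw [hc]
        exact mem_of_add K m
          (swap_sum K m j k [i] (mem_pair K m k i) (mem_pair K m j i) (mem_one K m i))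
          (mem_triple_sorted K m k j i hkj hji)

lemma main_mem : ∀ (n : ℕ) (u : List (Fin m)), u.length = n → u ≠ [] →
    scalarOf K 2 m (trw K m u) ∈ SA K m := by
  intro n
  induction n using Nat.strong_induction_on with
  | _ n ih =>
    intro u hlen hne
    rcases u with _ | ⟨a, _ | ⟨b, _ | ⟨c, _ | ⟨d, x⟩⟩⟩⟩
    · exact absurd rfl hne
    · exact mem_one K m a
    · exact mem_pair K m a b
    · exact mem_triple K m a b c
    · have H : ∀ v : List (Fin m), v ≠ [] → v.length < n →
          scalarOf K 2 m (trw K m v) ∈ SA K m := fun v hv hlt => ih v.length hlt v rfl hv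
      have hlen' : n = x.length + 4 := by simp at hlen; omega
      apply half_mem K m
      rw [← sc_add, trw_t4 K m a b c (d :: x)]
      simp only [sc_add, sc_sub, sc_mul]
      refine add_mem (sub_mem (add_mem (add_mem (sub_mem (add_mem ?_ ?_) ?_) ?_) ?_) ?_) ?_
      · exact mul_mem (mem_one K m a) (H (b::c::d::x) (by simp) (by simp [hlen']))
      · exact mul_mem (mem_one K m b) (H (a::c::d::x) (by simp) (by simp [hlen']))
      · exact mul_mem (mem_one K m c)
          (H (a::((d::x)++[b])) (by simp) (by simp [hlen', List.length_append]))
      · exact mul_mem (H (d::x) (by simp) (by simp [hlen'])) (mem_triple K m a b c)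
      · exact mul_mem (sub_mem (mem_pair K m a b) (mul_mem (mem_one K m a) (mem_one K m b)))
          (H (c::d::x) (by simp) (by simp [hlen']))
      · exact mul_mem (sub_mem (mem_pair K m a c) (mul_mem (mem_one K m a) (mem_one K m c)))
          (H (b::d::x) (by simp) (by simp [hlen']))
      · exact mul_mem (sub_mem (H (a::d::x) (by simp) (by simp [hlen']))
          (mul_mem (mem_one K m a) (H (d::x) (by simp) (by simp [hlen']))))
          (mem_pair K m b c)


end Stmt9Aux

/-- **Sibirskii.** For `k = 2`, `m ≥ 2`, the pure trace algebra `C_2m` is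
generated as a unital `K`-algebra by the scalar matrices `tr(y_i)·I`, `tr(y_i y_j)·I` for
`i ≤ j`, and `tr(y_{i_1} y_{i_2} y_{i_3})·I` for `i_1 < i_2 < i_3`. -/
theorem stmt9 (K : Type) [Field K] [CharZero K] (m : ℕ) (hm : 2 ≤ m) :
    Ckm K 2 m = Algebra.adjoin K
      ({x | ∃ i, x = scalarOf K 2 m (Matrix.trace (genY K 2 m i))} ∪
       {x | ∃ i j, i ≤ j ∧
          x = scalarOf K 2 m (Matrix.trace (genY K 2 m i * genY K 2 m j))} ∪
       {x | ∃ i₁ i₂ i₃, i₁ < i₂ ∧ i₂ < i₃ ∧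
          x = scalarOf K 2 m
            (Matrix.trace (genY K 2 m i₁ * genY K 2 m i₂ * genY K 2 m i₃))}) := by
  exact le_antisymm
    (by
      apply Algebra.adjoin_le
      rintro x ⟨l, w, rfl⟩
      have h : (List.ofFn fun j => genY K 2 m (w j)) = (List.ofFn w).map (genY K 2 m) := by
        rw [List.map_ofFn]; rfl
      rw [h]
      exact Stmt9Aux.main_mem K m (l + 1) (List.ofFn w) List.length_ofFn
        (by simp [← List.length_pos_iff_ne_nil]))
    (by
      apply Algebra.adjoin_le
      rintro x ((⟨i, rfl⟩ | ⟨i, j, hij, rfl⟩) | ⟨i, j, k, h1, h2, rfl⟩)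
      · exact Algebra.subset_adjoin ⟨0, fun _ => i, by simp⟩
      · exact Algebra.subset_adjoin ⟨1, ![i, j], by simp [List.ofFn_succ]⟩
      · exact Algebra.subset_adjoin ⟨2, ![i, j, k], by simp [List.ofFn_succ, mul_assoc]⟩)
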